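/- arXiv:1804.04959 — 5 statements merged into one kernel-verified Lean document; each statement's English description precedes it below -/
import Mathlib

section
/- Let z₁, z₂, z₃ be pairwise distinct complex numbers. The set {z₁, z₂, z₃} admits a nontrivial symmetry — i.e., there exist a ∈ ℂ \ {0} and b ∈ ℂ such that the affine map z ↦ az + b maps the set {z₁, z₂, z₃} onto itself and induces a nontrivial permutation of it — if and only if j(z₁, z₂, z₃) ∈ {0, 1}. -/
/-- The j-invariant of a triple of complex numbers (the j-invariant of the
quadruple `(z₁, z₂, z₃, ∞)`). -/
noncomputable def jInv3 (z₁ z₂ z₃ : ℂ) : ℂ :=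
  let l := (z₁ - z₃) / (z₂ - z₃)
  4 * (l ^ 2 - l + 1) ^ 3 / (27 * l ^ 2 * (l - 1) ^ 2)

/-- Three pairwise distinct points admit a nontrivial symmetry by an invertible
affine map `z ↦ a z + b` (mapping the set `{z₁, z₂, z₃}` onto itself and inducing
a nontrivial permutation of it) if and only if their j-invariant is `0` or `1`. -/
theorem jInv3_symmetry_iff (z₁ z₂ z₃ : ℂ)
    (h12 : z₁ ≠ z₂) (h13 : z₁ ≠ z₃) (h23 : z₂ ≠ z₃) :
    (∃ a b : ℂ, a ≠ 0 ∧
        (fun z => a * z + b) '' {z₁, z₂, z₃} = {z₁, z₂, z₃} ∧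
        ¬(a * z₁ + b = z₁ ∧ a * z₂ + b = z₂ ∧ a * z₃ + b = z₃)) ↔
      jInv3 z₁ z₂ z₃ = 0 ∨ jInv3 z₁ z₂ z₃ = 1 := by
  have hd12 : z₁ - z₂ ≠ 0 := sub_ne_zero.2 h12
  have hd13 : z₁ - z₃ ≠ 0 := sub_ne_zero.2 h13
  have hd23 : z₂ - z₃ ≠ 0 := sub_ne_zero.2 h23
  set l : ℂ := (z₁ - z₃) / (z₂ - z₃) with hldef
  have hlv : l * (z₂ - z₃) = z₁ - z₃ := div_mul_cancel₀ _ hd23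
  have hl0 : l ≠ 0 := div_ne_zero hd13 hd23
  have hl1 : l ≠ 1 := by
    intro h
    rw [h, one_mul] at hlv
    exact h12 (by linear_combination -hlv)
  have hden : (27 : ℂ) * l ^ 2 * (l - 1) ^ 2 ≠ 0 :=
    mul_ne_zero (mul_ne_zero (by norm_num) (pow_ne_zero _ hl0))
      (pow_ne_zero _ (sub_ne_zero.2 hl1))
  have hjd : jInv3 z₁ z₂ z₃ = 4 * (l ^ 2 - l + 1) ^ 3 / (27 * l ^ 2 * (l - 1) ^ 2) := by
    rw [hldef]; rfl
  constructor
  · rintro ⟨a, b, ha, himg, hne⟩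
    have hinj : ∀ x y : ℂ, a * x + b = a * y + b → x = y := fun x y h =>
      mul_left_cancel₀ ha (by linear_combination h)
    have key : ∀ z ∈ ({z₁, z₂, z₃} : Set ℂ), a * z + b ∈ ({z₁, z₂, z₃} : Set ℂ) := by
      intro z hz
      rw [← himg]
      exact ⟨z, hz, rfl⟩
    have m1 := key z₁ (by simp)
    have m2 := key z₂ (by simp)
    have m3 := key z₃ (by simp)
    simp only [Set.mem_insert_iff, Set.mem_singleton_iff] at m1 m2 m3
    rcases m1 with e1 | e1 | e1 <;> rcases m2 with e2 | e2 | e2 <;> rcases m3 with e3 | e3 | e3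
    all_goals try exact absurd (hinj _ _ (e1.trans e2.symm)) h12
    all_goals try exact absurd (hinj _ _ (e1.trans e3.symm)) h13
    all_goals try exact absurd (hinj _ _ (e2.trans e3.symm)) h23
    -- identity
    · exact absurd ⟨e1, e2, e3⟩ hne
    -- swap z₂ z₃
    · have ha1 : a = -1 := by
        rcases mul_eq_zero.1 (show (a + 1) * (z₂ - z₃) = 0 by linear_combination e2 - e3)
          with h | h
        · exact eq_neg_of_add_eq_zero_left h
        · exact absurd h hd23
      rw [ha1] at e1 e2
      have hz : 2 * z₁ - z₂ - z₃ = 0 := by linear_combination e2 - e1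
      have hfac : 2 * l - 1 = 0 := by
        rcases mul_eq_zero.1 (show (2 * l - 1) * (z₂ - z₃) = 0 by
          linear_combination 2 * hlv + hz) with h | h
        · exact h
        · exact absurd h hd23
      right
      rw [hjd, div_eq_one_iff_eq hden]
      linear_combination ((2 * l - 1) * (l + 1) ^ 2 * (l - 2) ^ 2) * hfac
    -- swap z₁ z₂
    · have ha1 : a = -1 := by
        rcases mul_eq_zero.1 (show (a + 1) * (z₁ - z₂) = 0 by linear_combination e1 - e2)
          with h | h
        · exact eq_neg_of_add_eq_zero_left h
        · exact absurd h hd12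
      rw [ha1] at e1 e3
      have hz : z₁ + z₂ - 2 * z₃ = 0 := by linear_combination e3 - e1
      have hfac : l + 1 = 0 := by
        rcases mul_eq_zero.1 (show (l + 1) * (z₂ - z₃) = 0 by
          linear_combination hlv + hz) with h | h
        · exact h
        · exact absurd h hd23
      right
      rw [hjd, div_eq_one_iff_eq hden]
      linear_combination ((l + 1) * (2 * l - 1) ^ 2 * (l - 2) ^ 2) * hfac
    -- 3-cycle z₁→z₂→z₃→z₁
    · have ha2 : a * (z₁ - z₂) = z₂ - z₃ := by linear_combination e1 - e2
      have ha3 : a * (z₂ - z₃) = z₃ - z₁ := by linear_combination e2 - e3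
      have hquad : (z₂ - z₃) ^ 2 - (z₁ - z₂) * (z₃ - z₁) = 0 := by
        rcases mul_eq_zero.1 (show a * ((z₂ - z₃) ^ 2 - (z₁ - z₂) * (z₃ - z₁)) = 0 by
          linear_combination (z₂ - z₃) * ha3 - (z₃ - z₁) * ha2) with h | h
        · exact absurd h ha
        · exact h
      have hfac : l ^ 2 - l + 1 = 0 := by
        rcases mul_eq_zero.1 (show (l ^ 2 - l + 1) * (z₂ - z₃) ^ 2 = 0 by
          linear_combination hquad + (l * (z₂ - z₃) + (z₁ - z₃) - (z₂ - z₃)) * hlv)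
          with h | h
        · exact h
        · exact absurd h (pow_ne_zero _ hd23)
      left
      rw [hjd, hfac]
      simp
    -- 3-cycle z₁→z₃→z₂→z₁
    · have ha2 : a * (z₁ - z₂) = z₃ - z₁ := by linear_combination e1 - e2
      have ha3 : a * (z₂ - z₃) = z₁ - z₂ := by linear_combination e2 - e3
      have hquad : (z₁ - z₂) ^ 2 - (z₂ - z₃) * (z₃ - z₁) = 0 := by
        rcases mul_eq_zero.1 (show a * ((z₁ - z₂) ^ 2 - (z₂ - z₃) * (z₃ - z₁)) = 0 by
          linear_combination (z₁ - z₂) * ha2 - (z₃ - z₁) * ha3) with h | h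
        · exact absurd h ha
        · exact h
      have hfac : l ^ 2 - l + 1 = 0 := by
        rcases mul_eq_zero.1 (show (l ^ 2 - l + 1) * (z₂ - z₃) ^ 2 = 0 by
          linear_combination hquad + (l * (z₂ - z₃) + (z₁ - z₃) - (z₂ - z₃)) * hlv)
          with h | h
        · exact h
        · exact absurd h (pow_ne_zero _ hd23)
      left
      rw [hjd, hfac]
      simp
    -- swap z₁ z₃
    · have ha1 : a = -1 := by
        rcases mul_eq_zero.1 (show (a + 1) * (z₁ - z₃) = 0 by linear_combination e1 - e3)
          with h | h
        · exact eq_neg_of_add_eq_zero_left h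
        · exact absurd h hd13
      rw [ha1] at e1 e2
      have hz : z₁ + z₃ - 2 * z₂ = 0 := by linear_combination e2 - e1
      have hfac : l - 2 = 0 := by
        rcases mul_eq_zero.1 (show (l - 2) * (z₂ - z₃) = 0 by
          linear_combination hlv + hz) with h | h
        · exact h
        · exact absurd h hd23
      right
      rw [hjd, div_eq_one_iff_eq hden]
      linear_combination ((l - 2) * (l + 1) ^ 2 * (2 * l - 1) ^ 2) * hfac
  · rintro (hj | hj)
    · -- j = 0 : equilateral, 3-cycle
      rw [hjd, div_eq_zero_iff] at hj
      have hx : l ^ 2 - l + 1 = 0 := by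
        rcases hj with h | h
        · have h3 : (l ^ 2 - l + 1) ^ 3 = 0 := by linear_combination h / 4
          exact pow_eq_zero_iff (by norm_num) |>.1 h3
        · exact absurd h hden
      have hquad : (z₂ - z₃) * (z₃ - z₁) = (z₁ - z₂) ^ 2 := by
        linear_combination (-(z₂ - z₃) ^ 2) * hx + (l * (z₂ - z₃) + (z₁ - z₃) - (z₂ - z₃)) * hlv
      refine ⟨(z₂ - z₃) / (z₁ - z₂), z₂ - (z₂ - z₃) / (z₁ - z₂) * z₁,
        div_ne_zero hd23 hd12, ?_, ?_⟩
      · have e1 : (z₂ - z₃) / (z₁ - z₂) * z₁ + (z₂ - (z₂ - z₃) / (z₁ - z₂) * z₁) = z₂ := by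
          ring
        have e2 : (z₂ - z₃) / (z₁ - z₂) * z₂ + (z₂ - (z₂ - z₃) / (z₁ - z₂) * z₁) = z₃ := by
          field_simp
          ring
        have e3 : (z₂ - z₃) / (z₁ - z₂) * z₃ + (z₂ - (z₂ - z₃) / (z₁ - z₂) * z₁) = z₁ := by
          field_simp
          linear_combination hquad
        simp only [Set.image_insert_eq, Set.image_singleton, e1, e2, e3]
        ext x
        simp only [Set.mem_insert_iff, Set.mem_singleton_iff]
        tauto
      · rintro ⟨hc, -, -⟩
        have : z₂ = z₁ := by
          have e1 : (z₂ - z₃) / (z₁ - z₂) * z₁ + (z₂ - (z₂ - z₃) / (z₁ - z₂) * z₁) = z₂ := by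
            ring
          exact e1.symm.trans hc
        exact h12 this.symm
    · -- j = 1 : one of the three swaps
      rw [hjd, div_eq_one_iff_eq hden] at hj
      have hsq : ((l + 1) * (2 * l - 1) * (l - 2)) ^ 2 = 0 := by linear_combination hj
      have hprod : (l + 1) * (2 * l - 1) * (l - 2) = 0 :=
        pow_eq_zero_iff (by norm_num) |>.1 hsq
      rcases mul_eq_zero.1 hprod with h' | hfac
      · rcases mul_eq_zero.1 h' with hfac | hfac
        · -- l = -1 : swap z₁ z₂, fix z₃
          have hz : z₁ + z₂ - 2 * z₃ = 0 := by linear_combination (z₂ - z₃) * hfac - hlv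
          refine ⟨-1, z₁ + z₂, by norm_num, ?_, ?_⟩
          · have e1 : -1 * z₁ + (z₁ + z₂) = z₂ := by ring
            have e2 : -1 * z₂ + (z₁ + z₂) = z₁ := by ring
            have e3 : -1 * z₃ + (z₁ + z₂) = z₃ := by linear_combination hz
            simp only [Set.image_insert_eq, Set.image_singleton, e1, e2, e3]
            ext x
            simp only [Set.mem_insert_iff, Set.mem_singleton_iff]
            tauto
          · rintro ⟨hc, -, -⟩
            exact h12 (by linear_combination -hc)
        · -- l = 1/2 : swap z₂ z₃, fix z₁
          have hz : 2 * z₁ - z₂ - z₃ = 0 := by linear_combination (z₂ - z₃) * hfac - 2 * hlv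
          refine ⟨-1, z₂ + z₃, by norm_num, ?_, ?_⟩
          · have e1 : -1 * z₁ + (z₂ + z₃) = z₁ := by linear_combination -hz
            have e2 : -1 * z₂ + (z₂ + z₃) = z₃ := by ring
            have e3 : -1 * z₃ + (z₂ + z₃) = z₂ := by ring
            simp only [Set.image_insert_eq, Set.image_singleton, e1, e2, e3]
            ext x
            simp only [Set.mem_insert_iff, Set.mem_singleton_iff]
            tauto
          · rintro ⟨-, hc, -⟩
            exact h23 (by linear_combination -hc)
      · -- l = 2 : swap z₁ z₃, fix z₂
        have hz : z₁ + z₃ - 2 * z₂ = 0 := by linear_combination (z₂ - z₃) * hfac - hlv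
        refine ⟨-1, z₁ + z₃, by norm_num, ?_, ?_⟩
        · have e1 : -1 * z₁ + (z₁ + z₃) = z₃ := by ring
          have e2 : -1 * z₂ + (z₁ + z₃) = z₂ := by linear_combination hz
          have e3 : -1 * z₃ + (z₁ + z₃) = z₁ := by ring
          simp only [Set.image_insert_eq, Set.image_singleton, e1, e2, e3]
          ext x
          simp only [Set.mem_insert_iff, Set.mem_singleton_iff]
          tauto
        · rintro ⟨hc, -, -⟩
          exact h13 (by linear_combination -hc)
end

section
/- Let z₁, z₂, z₃ be pairwise distinct complex numbers. Then j(z₁, z₂, z₃) is real and j(z₁, z₂, z₃) ≥ 1 if and only if the points z₁, z₂, z₃ are collinear, i.e., (z₃ − z₁)/(z₂ − z₁) ∈ ℝ. -/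
/-- If a real-coefficient cubic `2 X³ - (3+t) X² + (t-3) X + 2` has a complex
root, that root is real. -/
lemma cubic_root_real (t : ℝ) (l : ℂ)
    (hkey : 2 * l ^ 3 - (3 + (t : ℂ)) * l ^ 2 + ((t : ℂ) - 3) * l + 2 = 0) :
    l.im = 0 := by
  by_contra hy
  set x := l.re with hx
  set y := l.im with hyy
  have hxy : l = (x : ℂ) + (y : ℂ) * Complex.I := (Complex.re_add_im l).symm
  rw [hxy] at hkey
  have hre := congrArg Complex.re hkey
  have him := congrArg Complex.im hkey
  simp [Complex.ext_iff, pow_succ, Complex.add_re, Complex.add_im, Complex.mul_re,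
    Complex.mul_im] at hre him
  -- derive the two real polynomial equations
  have hE2 : 2*x^3 - 6*x*y^2 - (3+t)*x^2 + (3+t)*y^2 + (t-3)*x + 2 = 0 := by
    linear_combination hre
  have hE1y : y * (6*x^2 - 2*y^2 - (6+2*t)*x + t - 3) = 0 := by
    linear_combination him
  have hE1 : 6*x^2 - 2*y^2 - (6+2*t)*x + t - 3 = 0 := by
    rcases mul_eq_zero.mp hE1y with h | h
    · exact absurd h hy
    · exact h
  have hQ : 2*((x^2 - x + 1 + y^2)^2 + y^2) = 0 := by
    linear_combination (1 - 2*x) * hE2 - (-x^2 + y^2 + x) * hE1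
  have hy2 : 0 < y^2 := lt_of_le_of_ne (sq_nonneg y) (Ne.symm (pow_ne_zero 2 hy))
  nlinarith [sq_nonneg (x^2 - x + 1 + y^2)]

/-- For pairwise distinct points `z₁, z₂, z₃`: the j-invariant is real and `≥ 1`
if and only if the three points are collinear. -/
theorem jInv3_real_ge_one_iff_collinear (z₁ z₂ z₃ : ℂ)
    (h12 : z₁ ≠ z₂) (h13 : z₁ ≠ z₃) (h23 : z₂ ≠ z₃) :
    (∃ r : ℝ, jInv3 z₁ z₂ z₃ = (r : ℂ) ∧ 1 ≤ r) ↔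
      ∃ t : ℝ, (z₃ - z₁) / (z₂ - z₁) = (t : ℂ) := by
  have ha : z₁ - z₃ ≠ 0 := sub_ne_zero.mpr h13
  have hb : z₂ - z₃ ≠ 0 := sub_ne_zero.mpr h23
  have hab : z₂ - z₁ ≠ 0 := sub_ne_zero.mpr h12.symm
  set l : ℂ := (z₁ - z₃) / (z₂ - z₃) with hl
  have hl0 : l ≠ 0 := div_ne_zero ha hb
  have hl1 : l ≠ 1 := by
    intro h
    rw [hl, div_eq_one_iff_eq hb] at h
    exact h12 (by linear_combination h)
  have hl1' : l - 1 ≠ 0 := sub_ne_zero.mpr hl1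
  have hmu : (z₃ - z₁) / (z₂ - z₁) = l / (l - 1) := by
    rw [div_eq_div_iff hab hl1', hl]
    field_simp
    ring
  clear_value l
  constructor
  · rintro ⟨r, hj, hr⟩
    -- show l is real
    have hlim : l.im = 0 := by
      have hd : (27 * l ^ 2 * (l - 1) ^ 2 : ℂ) ≠ 0 := by
        apply mul_ne_zero (mul_ne_zero (by norm_num) (pow_ne_zero _ hl0)) (pow_ne_zero _ hl1')
      have hj' : 4 * (l ^ 2 - l + 1) ^ 3 = (r : ℂ) * (27 * l ^ 2 * (l - 1) ^ 2) := by
        have h := hj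
        simp only [jInv3] at h
        rw [← hl, div_eq_iff hd] at h
        exact h
      set c := Real.sqrt (27 * (r - 1)) with hc
      have hc2 : (c : ℝ) ^ 2 = 27 * (r - 1) := Real.sq_sqrt (by linarith)
      have hcc : ((c : ℂ)) ^ 2 = 27 * ((r : ℂ) - 1) := by
        rw [← Complex.ofReal_pow, hc2]; push_cast; ring
      have hfac : ((l+1)*(l-2)*(2*l-1) - (c:ℂ)*(l*(l-1))) *
          ((l+1)*(l-2)*(2*l-1) + (c:ℂ)*(l*(l-1))) = 0 := by
        linear_combination hj' - (l*(l-1))^2 * hcc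
      obtain ⟨t, hA⟩ : ∃ t : ℝ, (l+1)*(l-2)*(2*l-1) = (t:ℂ)*(l*(l-1)) := by
        rcases mul_eq_zero.mp hfac with h | h
        · exact ⟨c, by linear_combination h⟩
        · exact ⟨-c, by push_cast; linear_combination h⟩
      exact cubic_root_real t l (by linear_combination hA)
    refine ⟨l.re / (l.re - 1), ?_⟩
    have hlre : l = ((l.re : ℝ) : ℂ) := by
      apply Complex.ext <;> simp [hlim]
    rw [hmu, Complex.ofReal_div, Complex.ofReal_sub, Complex.ofReal_one, ← hlre]
  · rintro ⟨t, ht⟩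
    rw [hmu] at ht
    -- t ≠ 1 and l = t/(t-1)
    have h1 : l = (t : ℂ) * (l - 1) := by
      rw [div_eq_iff hl1'] at ht
      linear_combination ht
    have hlim : l.im = 0 := by
      have h2 := congrArg Complex.im h1
      simp [Complex.mul_im, Complex.sub_im] at h2
      have h3 : l.im * (1 - t) = 0 := by linear_combination h2
      rcases mul_eq_zero.mp h3 with h | h
      · exact h
      · exfalso
        have ht1 : (t : ℂ) = 1 := by
          have : t = 1 := by linarith
          rw [this]; norm_num
        rw [ht1] at h1
        have : (1 : ℂ) = 0 := by linear_combination h1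
        exact one_ne_zero this
    set s := l.re with hs
    have hlre : l = ((s : ℝ) : ℂ) := by
      apply Complex.ext <;> simp [hlim, hs]
    have hs0 : s ≠ 0 := by
      intro h; apply hl0; rw [hlre, h]; simp
    have hs1 : s ≠ 1 := by
      intro h; apply hl1; rw [hlre, h]; simp
    refine ⟨4 * (s^2 - s + 1)^3 / (27 * s^2 * (s-1)^2), ?_, ?_⟩
    · simp only [jInv3]
      rw [← hl, hlre]
      push_cast
      ring
    · have hd : (0:ℝ) < 27 * s^2 * (s-1)^2 := by
        have h1 : (0:ℝ) < s^2 := lt_of_le_of_ne (sq_nonneg s) (Ne.symm (pow_ne_zero 2 hs0))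
        have h2 : (0:ℝ) < (s-1)^2 :=
          lt_of_le_of_ne (sq_nonneg _) (Ne.symm (pow_ne_zero 2 (sub_ne_zero.mpr hs1)))
        positivity
      rw [le_div_iff₀ hd]
      nlinarith [sq_nonneg ((s+1)*(s-2)*(2*s-1))]
end

section
/- Let z₁, z₂, z₃ be pairwise distinct complex numbers. Then j(z₁, z₂, z₃) is real and j(z₁, z₂, z₃) < 1 if and only if the points z₁, z₂, z₃ are not collinear and form an isosceles triangle, i.e., (z₃ − z₁)/(z₂ − z₁) ∉ ℝ and at least two of the three side lengths |z₁ − z₂|, |z₂ − z₃|, |z₃ − z₁| are equal. -/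
open Complex

private lemma exists_real_iff (z : ℂ) : (∃ t : ℝ, z = (t : ℂ)) ↔ z.im = 0 := by
  constructor
  · rintro ⟨t, rfl⟩; simp
  · intro h; exact ⟨z.re, by apply Complex.ext <;> simp [h]⟩

private lemma abs_eq_abs_iff_normSq (a b : ℂ) :
    ‖a‖ = ‖b‖ ↔ Complex.normSq a = Complex.normSq b := by
  constructor
  · intro h; rw [← Complex.sq_norm a, ← Complex.sq_norm b, h]
  · intro h; rw [Complex.norm_def, Complex.norm_def, h]

private lemma key (l : ℂ) (h0 : l ≠ 0) (h1 : l ≠ 1) :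
    (∃ r : ℝ, 4 * (l ^ 2 - l + 1) ^ 3 / (27 * l ^ 2 * (l - 1) ^ 2) = (r : ℂ) ∧ r < 1) ↔
      ((¬∃ t : ℝ, l / (l - 1) = (t : ℂ)) ∧
        (‖l - 1‖ = 1 ∨ (1 : ℝ) = ‖l‖ ∨
          ‖l‖ = ‖l - 1‖)) := by
  have h1' : l - 1 ≠ 0 := sub_ne_zero.mpr h1
  have hcl : (starRingEnd ℂ) l ≠ 0 := by simpa using h0
  have hcl1 : (starRingEnd ℂ) l - 1 ≠ 0 := by
    intro h
    apply h1
    have h2 : (starRingEnd ℂ) l = 1 := by linear_combination h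
    apply_fun (starRingEnd ℂ) at h2
    simpa using h2
  set x := l.re with hx
  set y := l.im with hy
  set w : ℂ := (l + 1) * (2 * l - 1) * (l - 2) * (starRingEnd ℂ) l * ((starRingEnd ℂ) l - 1)
    with hw
  set c : ℝ := 27 * (Complex.normSq (l * (l - 1))) ^ 2 with hc
  have hcpos : 0 < c := by
    have h2 : 0 < Complex.normSq (l * (l - 1)) :=
      Complex.normSq_pos.mpr (mul_ne_zero h0 h1')
    positivity
  -- main algebraic identity
  have key1 : 4 * (l ^ 2 - l + 1) ^ 3 / (27 * l ^ 2 * (l - 1) ^ 2) = 1 + w ^ 2 / (c : ℂ) := by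
    have hns : ((Complex.normSq (l * (l - 1)) : ℝ) : ℂ)
        = (l * (l - 1)) * (starRingEnd ℂ) (l * (l - 1)) := (Complex.mul_conj _).symm
    rw [hc, hw]
    push_cast
    rw [hns]
    simp only [map_mul, map_sub, map_one]
    field_simp
    ring
  have hcC : (c : ℂ) ≠ 0 := by exact_mod_cast ne_of_gt hcpos
  -- reduce existence to a statement about w
  have key2 : (∃ r : ℝ, 4 * (l ^ 2 - l + 1) ^ 3 / (27 * l ^ 2 * (l - 1) ^ 2) = (r : ℂ) ∧ r < 1)
      ↔ (w.re = 0 ∧ w.im ≠ 0) := by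
    rw [key1]
    constructor
    · rintro ⟨r, hr, hr1⟩
      have hw2 : w ^ 2 = (((r - 1) * c : ℝ) : ℂ) := by
        push_cast
        field_simp at hr ⊢
        linear_combination hr
      have hre : (w ^ 2).re = (r - 1) * c := by rw [hw2]; simp
      have him : (w ^ 2).im = 0 := by rw [hw2]; simp
      have hre2 : (w ^ 2).re = w.re * w.re - w.im * w.im := by
        rw [pow_two, Complex.mul_re]
      have him2 : (w ^ 2).im = w.re * w.im + w.im * w.re := by
        rw [pow_two, Complex.mul_im]
      have hneg : w.re * w.re - w.im * w.im < 0 := by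
        have : (r - 1) * c < 0 := mul_neg_of_neg_of_pos (by linarith) hcpos
        nlinarith [hre, hre2]
      have hprod : w.re * w.im = 0 := by nlinarith [him, him2]
      have him0 : w.im ≠ 0 := by intro h; rw [h] at hneg; nlinarith
      refine ⟨?_, him0⟩
      rcases mul_eq_zero.mp hprod with h | h
      · exact h
      · exact absurd h him0
    · rintro ⟨hre, him⟩
      refine ⟨1 + (-(w.im ^ 2)) / c, ?_, ?_⟩
      · have hw2 : w ^ 2 = ((-(w.im ^ 2) : ℝ) : ℂ) := by
          have h3 : (w ^ 2).re = -(w.im ^ 2) := by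
            rw [pow_two, Complex.mul_re, hre]; ring
          have h4 : (w ^ 2).im = 0 := by
            rw [pow_two, Complex.mul_im, hre]; ring
          apply Complex.ext
          · rw [h3, Complex.ofReal_re]
          · rw [h4, Complex.ofReal_im]
        rw [hw2]
        push_cast
        ring
      · have h2 : 0 < w.im ^ 2 := by positivity
        have : -(w.im ^ 2) / c < 0 := div_neg_of_neg_of_pos (by linarith) hcpos
        linarith
  rw [key2]
  -- real-coordinate computations
  have hwre : w.re = (x ^ 2 + y ^ 2 - 1) * ((x - 1) ^ 2 + y ^ 2 - 1) * (2 * x - 1) := by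
    rw [hw]
    simp only [Complex.mul_re, Complex.mul_im, Complex.add_re, Complex.add_im, Complex.sub_re,
      Complex.sub_im, Complex.one_re, Complex.one_im, Complex.conj_re, Complex.conj_im,
      Complex.re_ofNat, Complex.im_ofNat, ← hx, ← hy]
    ring
  have hwim : w.im = y * (2 * x ^ 4 - 4 * x ^ 3 + 4 * x ^ 2 * y ^ 2 + 6 * x ^ 2 - 4 * x * y ^ 2
      - 4 * x + 2 * y ^ 4 + 6 * y ^ 2 + 2) := by
    rw [hw]
    simp only [Complex.mul_re, Complex.mul_im, Complex.add_re, Complex.add_im, Complex.sub_re,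
      Complex.sub_im, Complex.one_re, Complex.one_im, Complex.conj_re, Complex.conj_im,
      Complex.re_ofNat, Complex.im_ofNat, ← hx, ← hy]
    ring
  -- not-real condition
  have hnr : (¬∃ t : ℝ, l / (l - 1) = (t : ℂ)) ↔ y ≠ 0 := by
    rw [exists_real_iff]
    have him : (l / (l - 1)).im = -y / Complex.normSq (l - 1) := by
      rw [Complex.div_im]
      simp only [Complex.sub_re, Complex.sub_im, Complex.one_re, Complex.one_im, ← hx, ← hy]
      ring
    rw [him]
    have hns : Complex.normSq (l - 1) ≠ 0 := Complex.normSq_pos.mpr h1' |>.ne'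
    constructor
    · intro h hy0; exact h (by rw [hy0]; simp)
    · intro h h2
      apply h
      field_simp at h2
      linarith
  rw [hnr]
  -- side conditions
  have habs1 : ∀ z : ℂ, ‖z‖ = 1 ↔ Complex.normSq z = 1 := by
    intro z
    constructor
    · intro h; rw [← Complex.sq_norm, h]; ring
    · intro h; rw [Complex.norm_def, h, Real.sqrt_one]
  have hs1 : ‖l - 1‖ = 1 ↔ (x - 1) ^ 2 + y ^ 2 - 1 = 0 := by
    rw [habs1, Complex.normSq_apply]
    simp only [Complex.sub_re, Complex.sub_im, Complex.one_re, Complex.one_im, ← hx, ← hy]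
    constructor <;> intro h <;> linear_combination h
  have hs2 : (1 : ℝ) = ‖l‖ ↔ x ^ 2 + y ^ 2 - 1 = 0 := by
    rw [eq_comm, habs1, Complex.normSq_apply]
    simp only [← hx, ← hy]
    constructor <;> intro h <;> linear_combination h
  have hs3 : ‖l‖ = ‖l - 1‖ ↔ 2 * x - 1 = 0 := by
    rw [abs_eq_abs_iff_normSq, Complex.normSq_apply, Complex.normSq_apply]
    simp only [Complex.sub_re, Complex.sub_im, Complex.one_re, Complex.one_im, ← hx, ← hy]
    constructor <;> intro h <;> linear_combination h
  rw [hs1, hs2, hs3]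
  -- w.im = 0 and w.re = 0 forces y = 0
  have hwzero : w.im = 0 → w.re = 0 → y = 0 := by
    intro hi hr
    have hw0 : w = 0 := Complex.ext (by simpa using hr) (by simpa using hi)
    rw [hw] at hw0
    rcases mul_eq_zero.mp hw0 with h | h
    · rcases mul_eq_zero.mp h with h | h
      · rcases mul_eq_zero.mp h with h | h
        · rcases mul_eq_zero.mp h with h | h
          · have hl : l = -1 := by linear_combination h
            rw [hy, hl]; simp
          · have hl : l = 1 / 2 := by
              field_simp
              linear_combination h
            rw [hy, hl]
            simp
        · have hl : l = 2 := by linear_combination h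
          rw [hy, hl]; simp
      · exact absurd h hcl
    · exact absurd h hcl1
  constructor
  · rintro ⟨hre, him⟩
    constructor
    · intro hy0
      apply him
      rw [hwim, hy0]
      ring
    · rw [hwre] at hre
      rcases mul_eq_zero.mp hre with h | h
      · rcases mul_eq_zero.mp h with h | h
        · exact Or.inr (Or.inl h)
        · exact Or.inl h
      · exact Or.inr (Or.inr h)
  · rintro ⟨hy0, hcases⟩
    have hre : w.re = 0 := by
      rw [hwre]
      rcases hcases with h | h | h
      · rw [h]; ring
      · rw [h]; ring
      · rw [h]; ring
    refine ⟨hre, fun hi => hy0 (hwzero hi hre)⟩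

/-- For pairwise distinct points `z₁, z₂, z₃`: the j-invariant is real and `< 1`
if and only if the points are not collinear and form an isosceles triangle. -/
theorem jInv3_real_lt_one_iff_isosceles (z₁ z₂ z₃ : ℂ)
    (h12 : z₁ ≠ z₂) (h13 : z₁ ≠ z₃) (h23 : z₂ ≠ z₃) :
    (∃ r : ℝ, jInv3 z₁ z₂ z₃ = (r : ℂ) ∧ r < 1) ↔
      ((¬∃ t : ℝ, (z₃ - z₁) / (z₂ - z₁) = (t : ℂ)) ∧
        (‖z₁ - z₂‖ = ‖z₂ - z₃‖ ∨
          ‖z₂ - z₃‖ = ‖z₃ - z₁‖ ∨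
          ‖z₃ - z₁‖ = ‖z₁ - z₂‖)) := by
  have ha : z₂ - z₃ ≠ 0 := sub_ne_zero.mpr h23
  have ha' : ‖z₂ - z₃‖ ≠ 0 := norm_ne_zero_iff.mpr ha
  set l : ℂ := (z₁ - z₃) / (z₂ - z₃) with hl
  have h0 : l ≠ 0 := div_ne_zero (sub_ne_zero.mpr h13) ha
  have h1 : l ≠ 1 := by
    intro h
    rw [hl, div_eq_one_iff_eq ha] at h
    exact h12 (by linear_combination h)
  have e1 : z₁ - z₃ = l * (z₂ - z₃) := by rw [hl]; field_simp
  have e2 : z₁ - z₂ = (l - 1) * (z₂ - z₃) := by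
    rw [hl]
    field_simp
    try ring
  have ediv : (z₃ - z₁) / (z₂ - z₁) = l / (l - 1) := by
    rw [show z₃ - z₁ = -(l * (z₂ - z₃)) by rw [← e1]; ring,
        show z₂ - z₁ = -((l - 1) * (z₂ - z₃)) by rw [← e2]; ring]
    rw [neg_div_neg_eq, mul_div_mul_right _ _ ha]
  have eabs12 : ‖z₁ - z₂‖ = ‖l - 1‖ * ‖z₂ - z₃‖ := by
    rw [e2, norm_mul]
  have eabs31 : ‖z₃ - z₁‖ = ‖l‖ * ‖z₂ - z₃‖ := by
    rw [show z₃ - z₁ = -(l * (z₂ - z₃)) by rw [← e1]; ring, norm_neg, norm_mul]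
  have hj : jInv3 z₁ z₂ z₃ = 4 * (l ^ 2 - l + 1) ^ 3 / (27 * l ^ 2 * (l - 1) ^ 2) := rfl
  rw [hj, ediv, eabs12, eabs31, key l h0 h1]
  constructor
  · rintro ⟨hnr, hcases⟩
    refine ⟨hnr, ?_⟩
    rcases hcases with h | h | h
    · exact Or.inl (by rw [h, one_mul])
    · exact Or.inr (Or.inl (by rw [← h, one_mul]))
    · exact Or.inr (Or.inr (by rw [h]))
  · rintro ⟨hnr, hcases⟩
    refine ⟨hnr, ?_⟩
    rcases hcases with h | h | h
    · exact Or.inl (mul_right_cancel₀ ha' (by rw [h, one_mul]))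
    · exact Or.inr (Or.inl (mul_left_cancel₀ ha' (by rw [mul_comm ‖l‖] at h; rw [← h, mul_one]) ).symm)
    · exact Or.inr (Or.inr (mul_right_cancel₀ ha' h))
end

section
/- Let z₁, z₂, z₃ be pairwise distinct complex numbers. If j(z₁, z₂, z₃) is not real, then the three side lengths |z₁ − z₂|, |z₂ − z₃|, |z₃ − z₁| are pairwise distinct (so the points form a triangle with side lengths pairwise different). -/
noncomputable def Jfun (l : ℂ) : ℂ := 4 * (l ^ 2 - l + 1) ^ 3 / (27 * l ^ 2 * (l - 1) ^ 2)

lemma Jfun_inv (l : ℂ) (hl0 : l ≠ 0) (hl1 : l - 1 ≠ 0) : Jfun (1/l) = Jfun l := by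
  have h1 : (1:ℂ)/l - 1 = (1 - l)/l := by field_simp
  have h2 : (1:ℂ) - l ≠ 0 := fun h => hl1 (by linear_combination -h)
  unfold Jfun
  rw [div_eq_div_iff (mul_ne_zero (mul_ne_zero (by norm_num)
      (pow_ne_zero _ (one_div_ne_zero hl0))) (pow_ne_zero _ (by rw [h1]; exact div_ne_zero h2 hl0)))
    (mul_ne_zero (mul_ne_zero (by norm_num) (pow_ne_zero _ hl0)) (pow_ne_zero _ hl1))]
  field_simp
  ring

lemma Jfun_one_sub (l : ℂ) (hl0 : l ≠ 0) (hl1 : l - 1 ≠ 0) : Jfun (1 - l) = Jfun l := by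
  have h2 : (1:ℂ) - l ≠ 0 := fun h => hl1 (by linear_combination -h)
  have h3 : (1:ℂ) - l - 1 ≠ 0 := fun h => hl0 (by linear_combination -h)
  unfold Jfun
  rw [div_eq_div_iff (mul_ne_zero (mul_ne_zero (by norm_num)
      (pow_ne_zero _ h2)) (pow_ne_zero _ h3))
    (mul_ne_zero (mul_ne_zero (by norm_num) (pow_ne_zero _ hl0)) (pow_ne_zero _ hl1))]
  ring

lemma Jfun_div (l : ℂ) (hl0 : l ≠ 0) (hl1 : l - 1 ≠ 0) : Jfun (l/(l-1)) = Jfun l := by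
  have h1 : l/(l-1) - 1 = 1/(l-1) := by field_simp; ring
  unfold Jfun
  rw [div_eq_div_iff (mul_ne_zero (mul_ne_zero (by norm_num)
      (pow_ne_zero _ (div_ne_zero hl0 hl1)))
      (pow_ne_zero _ (by rw [h1]; exact one_div_ne_zero hl1)))
    (mul_ne_zero (mul_ne_zero (by norm_num) (pow_ne_zero _ hl0)) (pow_ne_zero _ hl1))]
  field_simp
  ring

lemma Jfun_im_eq_zero (l : ℂ) (hl0 : l ≠ 0) (hl1 : l - 1 ≠ 0)
    (h : (starRingEnd ℂ) l = 1/l ∨ (starRingEnd ℂ) l = 1 - l ∨ (starRingEnd ℂ) l = l/(l-1)) :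
    (Jfun l).im = 0 := by
  rw [← Complex.conj_eq_iff_im]
  have hc : (starRingEnd ℂ) (Jfun l) = Jfun ((starRingEnd ℂ) l) := by
    simp [Jfun, map_div₀, map_ofNat]
  rw [hc]
  rcases h with h | h | h <;> rw [h]
  · exact Jfun_inv l hl0 hl1
  · exact Jfun_one_sub l hl0 hl1
  · exact Jfun_div l hl0 hl1

/-- If the j-invariant of three pairwise distinct points is not real, then the
three side lengths of the triangle they form are pairwise distinct. -/
theorem sides_distinct_of_jInv3_not_real (z₁ z₂ z₃ : ℂ)
    (h12 : z₁ ≠ z₂) (h13 : z₁ ≠ z₃) (h23 : z₂ ≠ z₃)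
    (hj : (jInv3 z₁ z₂ z₃).im ≠ 0) :
    ‖z₁ - z₂‖ ≠ ‖z₂ - z₃‖ ∧
    ‖z₂ - z₃‖ ≠ ‖z₃ - z₁‖ ∧
    ‖z₃ - z₁‖ ≠ ‖z₁ - z₂‖ := by
  have hd : z₂ - z₃ ≠ 0 := sub_ne_zero.mpr h23
  set l : ℂ := (z₁ - z₃) / (z₂ - z₃) with hldef
  have hl0 : l ≠ 0 := div_ne_zero (sub_ne_zero.mpr h13) hd
  have hl1 : l - 1 ≠ 0 := by
    rw [sub_ne_zero]
    intro h
    apply h12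
    have h' : z₁ - z₃ = z₂ - z₃ := by
      rw [hldef] at h
      field_simp at h
      linear_combination h
    exact sub_left_inj.mp h'
  have lsub : l - 1 = (z₁ - z₂) / (z₂ - z₃) := by
    rw [hldef]; field_simp; ring
  have hjJ : jInv3 z₁ z₂ z₃ = Jfun l := rfl
  rw [hjJ] at hj
  have habsd : ‖z₂ - z₃‖ ≠ 0 := norm_ne_zero_iff.mpr hd
  refine ⟨?_, ?_, ?_⟩
  · intro habs
    apply hj
    have h1 : ‖l - 1‖ = 1 := by
      rw [lsub, norm_div, habs, div_self habsd]
    have h2 : (l - 1) * ((starRingEnd ℂ) l - 1) = 1 := by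
      have e := Complex.mul_conj (l - 1)
      rw [Complex.normSq_eq_norm_sq, h1] at e
      simp only [map_sub, map_one] at e
      simpa using e
    refine Jfun_im_eq_zero l hl0 hl1 (Or.inr (Or.inr ?_))
    rw [eq_div_iff hl1]
    linear_combination h2
  · intro habs
    apply hj
    have h1 : ‖l‖ = 1 := by
      rw [hldef, norm_div, norm_sub_rev z₁ z₃, ← habs, div_self habsd]
    have h2 : l * (starRingEnd ℂ) l = 1 := by
      have e := Complex.mul_conj l
      rw [Complex.normSq_eq_norm_sq, h1] at e
      simpa using e
    refine Jfun_im_eq_zero l hl0 hl1 (Or.inl ?_)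
    rw [eq_div_iff hl0]
    linear_combination h2
  · intro habs
    apply hj
    have h1 : ‖l‖ = ‖l - 1‖ := by
      rw [hldef, lsub, norm_div, norm_div, norm_sub_rev z₁ z₃, habs]
    have h2 : l * (starRingEnd ℂ) l = (l - 1) * ((starRingEnd ℂ) l - 1) := by
      have e1 := Complex.mul_conj l
      have e2 := Complex.mul_conj (l - 1)
      rw [Complex.normSq_eq_norm_sq] at e1 e2
      rw [h1] at e1
      simp only [map_sub, map_one] at e2
      exact e1.trans e2.symm
    refine Jfun_im_eq_zero l hl0 hl1 (Or.inr (Or.inl ?_))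
    linear_combination h2
end

section
/- Let z₁, z₂, z₃ be pairwise distinct complex numbers with j(z₁, z₂, z₃) ∉ ℝ, and let (z_a, z_b, z_c) be the ordering of the three points by increasing length of the opposite side, i.e., |z_b − z_c| < |z_a − z_c| < |z_a − z_b| (this ordering exists and is unique since the side lengths are pairwise distinct). Then Im(j(z₁, z₂, z₃)) > 0 if and only if the ordered triple (z_a, z_b, z_c) is positively oriented, i.e., Im((z_c − z_a)/(z_b − z_a)) > 0. -/
set_option maxHeartbeats 1000000


noncomputable def jF (u v w : ℂ) : ℂ :=
  4 * ((u-w)^2 - (u-w)*(v-w) + (v-w)^2)^3 / (27 * (u-w)^2 * (v-w)^2 * (u-v)^2)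

lemma jhelper (p q : ℂ) (hp : p ≠ 0) (hq : q ≠ 0) (hpq : p - q ≠ 0) :
    4 * ((p/q) ^ 2 - (p/q) + 1) ^ 3 / (27 * (p/q) ^ 2 * ((p/q) - 1) ^ 2)
      = 4 * (p^2 - p*q + q^2)^3 / (27 * p^2 * q^2 * (p-q)^2) := by
  have e1 : (p/q) - 1 = (p-q)/q := by field_simp
  have hl : p / q ≠ 0 := div_ne_zero hp hq
  have hl1 : (p - q) / q ≠ 0 := div_ne_zero hpq hq
  rw [e1, div_eq_div_iff
    (mul_ne_zero (mul_ne_zero (by norm_num) (pow_ne_zero 2 hl)) (pow_ne_zero 2 hl1))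
    (mul_ne_zero (mul_ne_zero (mul_ne_zero (by norm_num) (pow_ne_zero 2 hp)) (pow_ne_zero 2 hq)) (pow_ne_zero 2 hpq))]
  field_simp

lemma jInv3_eq_jF (u v w : ℂ) (h12 : u ≠ v) (h13 : u ≠ w) (h23 : v ≠ w) :
    jInv3 u v w = jF u v w := by
  have h1 : u - w ≠ 0 := sub_ne_zero.2 h13
  have h2 : v - w ≠ 0 := sub_ne_zero.2 h23
  have h3 : u - w - (v - w) ≠ 0 := by
    rw [show u - w - (v - w) = u - v by ring]; exact sub_ne_zero.2 h12
  have := jhelper (u - w) (v - w) h1 h2 h3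
  simp only [jInv3, jF]
  rw [this, show u - w - (v - w) = u - v by ring]

lemma jF_swap12 (u v w : ℂ) : jF u v w = jF v u w := by
  simp only [jF]; ring_nf

lemma jF_swap23 (u v w : ℂ) : jF u v w = jF u w v := by
  simp only [jF]; ring_nf

lemma jkey (z : ℂ) :
    (4 * (z ^ 2 - z + 1) ^ 3).im * (27 * z ^ 2 * (z - 1) ^ 2).re
      - (4 * (z ^ 2 - z + 1) ^ 3).re * (27 * z ^ 2 * (z - 1) ^ 2).im
    = 108 * z.im * (2 * z.re - 1) * ((z.re ^ 2 + z.im ^ 2) - 1)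
        * (((z.re - 1) ^ 2 + z.im ^ 2) - 1)
        * ((z.re ^ 2 - z.re + 1 + z.im ^ 2) ^ 2 + z.im ^ 2) := by
  simp [Complex.mul_re, Complex.mul_im, Complex.sub_re, Complex.sub_im, pow_succ]
  ring

lemma main_core (a b c : ℂ) (hab : a ≠ b) (hac : a ≠ c) (hbc : b ≠ c)
    (hj : (jInv3 a b c).im ≠ 0)
    (h1 : ‖b - c‖ < ‖a - c‖)
    (h2 : ‖a - c‖ < ‖a - b‖) :
    0 < (jInv3 a b c).im ↔ 0 < ((c - a) / (b - a)).im := by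
  have hbc0 : b - c ≠ 0 := sub_ne_zero.2 hbc
  have hac0 : a - c ≠ 0 := sub_ne_zero.2 hac
  have hab0 : a - b ≠ 0 := sub_ne_zero.2 hab
  have hba0 : b - a ≠ 0 := sub_ne_zero.2 (Ne.symm hab)
  set z : ℂ := (a - c) / (b - c) with hzdef
  -- abs facts
  have habsz : 1 < ‖z‖ := by
    rw [hzdef, norm_div, one_lt_div (norm_pos_iff.mpr hbc0)]
    exact h1
  have hz1eq : z - 1 = (a - b) / (b - c) := by
    rw [hzdef, div_sub_one hbc0]; congr 1; ring
  have habsz1 : ‖z‖ < ‖z - 1‖ := by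
    rw [hzdef, hz1eq, norm_div, norm_div]
    gcongr
  have hz0 : z ≠ 0 := by
    intro h; rw [h] at habsz; simp at habsz; linarith
  have hz10 : z - 1 ≠ 0 := by
    intro h; rw [h] at habsz1; simp at habsz1
    linarith [norm_nonneg z]
  -- normSq facts
  have hn1 : 1 < z.re ^ 2 + z.im ^ 2 := by
    have h' : 1 < ‖z‖ ^ 2 := by nlinarith [norm_nonneg z]
    rw [Complex.sq_norm, Complex.normSq_apply] at h'
    nlinarith [h']
  have hn2 : z.re ^ 2 + z.im ^ 2 < (z.re - 1) ^ 2 + z.im ^ 2 := by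
    have h := habsz1
    have e1 : ‖z‖ ^ 2 < ‖z - 1‖ ^ 2 := by
      nlinarith [norm_nonneg z, norm_nonneg (z - 1)]
    rw [Complex.sq_norm, Complex.sq_norm, Complex.normSq_apply, Complex.normSq_apply] at e1
    simpa [Complex.sub_re, Complex.sub_im, sq] using e1
  have hx : 2 * z.re - 1 < 0 := by nlinarith
  -- j in terms of z
  have hJ : jInv3 a b c = 4 * (z ^ 2 - z + 1) ^ 3 / (27 * z ^ 2 * (z - 1) ^ 2) := rfl
  have hD : (27 : ℂ) * z ^ 2 * (z - 1) ^ 2 ≠ 0 :=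
    mul_ne_zero (mul_ne_zero (by norm_num) (pow_ne_zero 2 hz0)) (pow_ne_zero 2 hz10)
  have hDpos : 0 < Complex.normSq (27 * z ^ 2 * (z - 1) ^ 2) := Complex.normSq_pos.2 hD
  have him : (jInv3 a b c).im
      = (108 * z.im * (2 * z.re - 1) * ((z.re ^ 2 + z.im ^ 2) - 1)
          * (((z.re - 1) ^ 2 + z.im ^ 2) - 1)
          * ((z.re ^ 2 - z.re + 1 + z.im ^ 2) ^ 2 + z.im ^ 2))
        / Complex.normSq (27 * z ^ 2 * (z - 1) ^ 2) := by
    rw [hJ, Complex.div_im, ← jkey z]; ring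
  -- positive factors
  have P1 : 0 < (z.re ^ 2 + z.im ^ 2) - 1 := by linarith
  have P2 : 0 < ((z.re - 1) ^ 2 + z.im ^ 2) - 1 := by linarith
  have P3 : 0 < (z.re ^ 2 - z.re + 1 + z.im ^ 2) ^ 2 + z.im ^ 2 := by
    nlinarith [sq_nonneg (z.re - 1/2), sq_nonneg z.im, sq_nonneg (2 * z.re - 1)]
  have hQ : (2 * z.re - 1) * (((z.re ^ 2 + z.im ^ 2) - 1)
      * ((((z.re - 1) ^ 2 + z.im ^ 2) - 1)
        * ((z.re ^ 2 - z.re + 1 + z.im ^ 2) ^ 2 + z.im ^ 2))) < 0 :=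
    mul_neg_of_neg_of_pos hx (mul_pos P1 (mul_pos P2 P3))
  set Q : ℝ := (2 * z.re - 1) * (((z.re ^ 2 + z.im ^ 2) - 1)
      * ((((z.re - 1) ^ 2 + z.im ^ 2) - 1)
        * ((z.re ^ 2 - z.re + 1 + z.im ^ 2) ^ 2 + z.im ^ 2))) with hQdef
  have him' : (jInv3 a b c).im = 108 * z.im * Q / Complex.normSq (27 * z ^ 2 * (z - 1) ^ 2) := by
    rw [him, hQdef]; ring_nf
  have hLHS : 0 < (jInv3 a b c).im ↔ z.im < 0 := by
    rw [him']
    rw [div_pos_iff]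
    constructor
    · rintro (⟨h, _⟩ | ⟨_, h⟩)
      · nlinarith
      · linarith
    · intro h
      exact Or.inl ⟨by nlinarith, hDpos⟩
  -- RHS
  have hrhs : (c - a) / (b - a) = z / (z - 1) := by
    rw [div_eq_div_iff hba0 hz10, hz1eq, hzdef, mul_div_assoc', div_mul_eq_mul_div]
    congr 1; ring
  have hrim : ((c - a) / (b - a)).im = -z.im / Complex.normSq (z - 1) := by
    rw [hrhs, Complex.div_im]
    simp [Complex.sub_re, Complex.sub_im]
    ring
  have hRHS : 0 < ((c - a) / (b - a)).im ↔ z.im < 0 := by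
    rw [hrim, div_pos_iff]
    have hnn : 0 < Complex.normSq (z - 1) := Complex.normSq_pos.2 hz10
    constructor
    · rintro (⟨h, _⟩ | ⟨_, h⟩)
      · linarith
      · linarith
    · intro h
      exact Or.inl ⟨by linarith, hnn⟩
  rw [hLHS, hRHS]

/-- Let `z₁, z₂, z₃` be pairwise distinct points whose j-invariant is not real,
and let `(a, b, c)` be their ordering by increasing length of the opposite side,
i.e. `|b − c| < |a − c| < |a − b|`. Then `Im j > 0` if and only if the ordered
triple `(a, b, c)` is positively oriented, i.e. `Im ((c − a)/(b − a)) > 0`. -/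
theorem jInv3_im_pos_iff_orientation (z₁ z₂ z₃ a b c : ℂ)
    (h12 : z₁ ≠ z₂) (h13 : z₁ ≠ z₃) (h23 : z₂ ≠ z₃)
    (hj : (jInv3 z₁ z₂ z₃).im ≠ 0)
    (hset : ({a, b, c} : Set ℂ) = {z₁, z₂, z₃})
    (hbc : ‖b - c‖ < ‖a - c‖)
    (hac : ‖a - c‖ < ‖a - b‖) :
    0 < (jInv3 z₁ z₂ z₃).im ↔ 0 < ((c - a) / (b - a)).im := by
  have key : ∀ x : ℂ, (x = a ∨ x = b ∨ x = c) ↔ (x = z₁ ∨ x = z₂ ∨ x = z₃) := by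
    intro x
    have := Set.ext_iff.1 hset x
    simpa using this
  have h21 : z₂ ≠ z₁ := h12.symm
  have h31 : z₃ ≠ z₁ := h13.symm
  have h32 : z₃ ≠ z₂ := h23.symm
  have ka := (key a).1 (Or.inl rfl)
  have kb := (key b).1 (Or.inr (Or.inl rfl))
  have kc := (key c).1 (Or.inr (Or.inr rfl))
  have k1 := (key z₁).2 (Or.inl rfl)
  have k2 := (key z₂).2 (Or.inr (Or.inl rfl))
  have k3 := (key z₃).2 (Or.inr (Or.inr rfl))
  have hperm : (a = z₁ ∧ b = z₂ ∧ c = z₃) ∨ (a = z₁ ∧ b = z₃ ∧ c = z₂)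
      ∨ (a = z₂ ∧ b = z₁ ∧ c = z₃) ∨ (a = z₂ ∧ b = z₃ ∧ c = z₁)
      ∨ (a = z₃ ∧ b = z₁ ∧ c = z₂) ∨ (a = z₃ ∧ b = z₂ ∧ c = z₁) := by
    clear hj hbc hac hset
    rcases ka with rfl | rfl | rfl <;> rcases kb with rfl | rfl | rfl <;>
      rcases kc with rfl | rfl | rfl <;> simp_all
  rcases hperm with ⟨rfl, rfl, rfl⟩ | ⟨rfl, rfl, rfl⟩ | ⟨rfl, rfl, rfl⟩ |
    ⟨rfl, rfl, rfl⟩ | ⟨rfl, rfl, rfl⟩ | ⟨rfl, rfl, rfl⟩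
  · exact main_core a b c h12 h13 h23 hj hbc hac
  · have e : jInv3 a c b = jInv3 a b c := by
      rw [jInv3_eq_jF _ _ _ h12 h13 h23, jF_swap23, ← jInv3_eq_jF _ _ _ h13 h12 h32]
    rw [e] at hj ⊢
    exact main_core a b c h13 h12 h32 hj hbc hac
  · have e : jInv3 b a c = jInv3 a b c := by
      rw [jInv3_eq_jF _ _ _ h12 h13 h23, jF_swap12, ← jInv3_eq_jF _ _ _ h21 h23 h13]
    rw [e] at hj ⊢
    exact main_core a b c h21 h23 h13 hj hbc hac
  · have e : jInv3 c a b = jInv3 a b c := by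
      rw [jInv3_eq_jF _ _ _ h12 h13 h23, jF_swap12, jF_swap23,
        ← jInv3_eq_jF _ _ _ h23 h21 h31]
    rw [e] at hj ⊢
    exact main_core a b c h23 h21 h31 hj hbc hac
  · have e : jInv3 b c a = jInv3 a b c := by
      rw [jInv3_eq_jF _ _ _ h12 h13 h23, jF_swap23, jF_swap12,
        ← jInv3_eq_jF _ _ _ h31 h32 h12]
    rw [e] at hj ⊢
    exact main_core a b c h31 h32 h12 hj hbc hac
  · have e : jInv3 c b a = jInv3 a b c := by
      rw [jInv3_eq_jF _ _ _ h12 h13 h23, jF_swap12, jF_swap23, jF_swap12,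
        ← jInv3_eq_jF _ _ _ h32 h31 h21]
    rw [e] at hj ⊢
    exact main_core a b c h32 h31 h21 hj hbc hac
end
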